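/- If every participating process starts the lean-consensus algorithm with the same input bit b, then in every execution every process decides b after executing at most 8 operations (i.e., by the end of its second round). -/

import Mathlib

/-- Local state of a process executing the lean-consensus algorithm.  `pc ∈ {0,1,2,3}`
is the index of the next operation within the current round: `0` = read `a_0[r]`,
`1` = read `a_1[r]`, `2` = write `1` to `a_p[r]`, `3` = read `a_{1-p}[r-1]` (deciding `p`
if it is `0`).  `pref` is the current preference, `round` the current round number,
`firstRead` the value read from `a_0[r]` at `pc = 0`, and `decided` records the decision
value once the process has decided (after which it takes no further steps). -/
structure ProcState where
  pc : ℕ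
  pref : Bool
  round : ℕ
  firstRead : Bool
  decided : Option Bool
  deriving DecidableEq

/-- A global configuration of the lean-consensus algorithm: the contents of the two
register arrays (`reg b r` is the register `a_b[r]`, where bit `false` stands for `0` and
`true` for `1`) together with the local state of each of the `N` processes. -/
structure Config (N : ℕ) where
  reg : Bool → ℕ → Bool
  proc : Fin N → ProcState

/-- The initial configuration: `a_0[0] = a_1[0] = 1`, all other registers `0`, and every
process at the first operation of round `1`, preferring its input bit. -/
def initConfig (N : ℕ) (input : Fin N → Bool) : Config N where
  reg := fun _ r => r == 0
  proc := fun i => ⟨0, input i, 1, false, none⟩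

/-- One atomic operation of a single process of the lean-consensus algorithm: given the
current register contents and the process's local state, return its new local state
together with `some (b, r)` if the operation writes `1` to register `a_b[r]` (and `none`
for a read).  A decided process does nothing. -/
def procStep (reg : Bool → ℕ → Bool) (s : ProcState) : ProcState × Option (Bool × ℕ) :=
  if s.decided ≠ none then (s, none)
  else if s.pc = 0 then ({ s with pc := 1, firstRead := reg false s.round }, none)
  else if s.pc = 1 then
    let v0 := s.firstRead
    let v1 := reg true s.round
    let p := if v0 = true ∧ v1 = false then false
             else if v1 = true ∧ v0 = false then true
             else s.pref
    ({ s with pc := 2, pref := p }, none)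
  else if s.pc = 2 then ({ s with pc := 3 }, some (s.pref, s.round))
  else if reg (!s.pref) (s.round - 1) = false then
    ({ s with decided := some s.pref }, none)
  else ({ s with pc := 0, round := s.round + 1 }, none)

/-- The global transition: process `i` performs its next atomic operation (interleaving
semantics). -/
def step {N : ℕ} (c : Config N) (i : Fin N) : Config N :=
  let r := procStep c.reg (c.proc i)
  { reg := fun b k => match r.2 with
      | some w => if b = w.1 ∧ k = w.2 then true else c.reg b k
      | none => c.reg b k
    proc := Function.update c.proc i r.1 }

/-- `run input sched t` is the configuration reached after the first `t` steps of the
execution of lean-consensus from inputs `input` in which the process `sched s` performs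
the `s`-th atomic operation. -/
def run {N : ℕ} (input : Fin N → Bool) (sched : ℕ → Fin N) : ℕ → Config N
  | 0 => initConfig N input
  | t + 1 => step (run input sched t) (sched t)

def cnt {N : ℕ} (sched : ℕ → Fin N) (i : Fin N) (t : ℕ) : ℕ :=
  ((Finset.range t).filter fun s => sched s = i).card

lemma cnt_succ {N : ℕ} (sched : ℕ → Fin N) (i : Fin N) (t : ℕ) :
    cnt sched i (t + 1) = cnt sched i t + (if sched t = i then 1 else 0) := by
  unfold cnt
  rw [Finset.range_add_one, Finset.filter_insert]
  split
  · rw [Finset.card_insert_of_notMem (by simp)]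
  · simp

def PInv (b : Bool) (k : ℕ) (s : ProcState) : Prop :=
  if 8 ≤ k then s.decided = some b
  else s.decided = none ∧ s.pref = b ∧ s.pc = k % 4 ∧ s.round = k / 4 + 1 ∧
    (k % 4 = 1 → b = true → s.firstRead = false)


lemma invariant {N : ℕ} (b : Bool) (input : Fin N → Bool) (hinput : ∀ i, input i = b)
    (sched : ℕ → Fin N) (t : ℕ) :
    (∀ r, 1 ≤ r → (run input sched t).reg (!b) r = false) ∧
    (∀ x, (run input sched t).reg x 0 = true) ∧
    (∀ i, PInv b (cnt sched i t) ((run input sched t).proc i)) := by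
  induction t with
  | zero =>
    refine ⟨?_, ?_, ?_⟩
    · intro r hr; simp [run, initConfig]; omega
    · intro x; simp [run, initConfig]
    · intro i; simp [run, initConfig, cnt, PInv, hinput i]
  | succ t ih =>
    obtain ⟨hR, h0, hP⟩ := ih
    set c := run input sched t with hc
    set j := sched t with hj
    have hrun : run input sched (t + 1) = step c j := rfl
    have hPj := hP j
    have hb : (!b) ≠ b := by cases b <;> simp
    rcases le_or_gt 8 (cnt sched j t) with h8 | h8
    · -- decided already
      have hd : (c.proc j).decided = some b := by
        simpa [PInv, if_pos h8] using hPj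
      have hps : procStep c.reg (c.proc j) = (c.proc j, none) := by
        unfold procStep; simp [hd]
      refine ⟨?_, ?_, ?_⟩
      · intro r hr; rw [hrun]; simp [step, hps]; exact hR r hr
      · intro x; rw [hrun]; simp [step, hps]; exact h0 x
      · intro i
        rw [hrun, cnt_succ]
        by_cases hij : j = i
        · subst hij
          simp only [step, hps, Function.update_self, if_pos rfl]
          unfold PInv
          rw [if_pos (by omega)]
          simpa using hd
        · have hii : sched t = i ↔ False := by constructor <;> intro h <;> simp_all
          simp [step, hps, Function.update_of_ne (Ne.symm hij), hii]
          exact hP i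
    · have hPj' : (c.proc j).decided = none ∧ (c.proc j).pref = b ∧
          (c.proc j).pc = cnt sched j t % 4 ∧ (c.proc j).round = cnt sched j t / 4 + 1 ∧
          (cnt sched j t % 4 = 1 → b = true → (c.proc j).firstRead = false) := by
        simpa [PInv, if_neg (by omega : ¬ 8 ≤ cnt sched j t)] using hPj
      obtain ⟨hdec, hpref, hpc, hround, hfr⟩ := hPj'
      set k := cnt sched j t with hk
      clear_value k
      have hnd : ¬ (c.proc j).decided ≠ none := by simp [hdec]
      have key : ∃ s' w, procStep c.reg (c.proc j) = (s', w) ∧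
          PInv b (k + 1) s' ∧ (∀ x y, w = some (x, y) → x = b ∧ 1 ≤ y) := by
        interval_cases k
        all_goals simp only [Nat.reduceMod, Nat.reduceDiv, Nat.reduceAdd, Nat.zero_div,
          Nat.zero_mod] at hpc hround hfr
        -- k = 0 : read a_0[1]
        · have hps : procStep c.reg (c.proc j) =
              ({c.proc j with pc := 1, firstRead := c.reg false (c.proc j).round}, none) := by
            unfold procStep; rw [if_neg hnd, if_pos hpc]
          refine ⟨_, _, hps, ?_, by intro x y h; simp at h⟩
          unfold PInv
          rw [if_neg (by norm_num)]
          refine ⟨hdec, hpref, rfl, by rw [hround], fun _ hb' => ?_⟩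
          have := hR (c.proc j).round (by omega)
          rw [hb'] at this
          simpa using this
        -- k = 1 : read a_1[1], set preference
        · have hp : (if (c.proc j).firstRead = true ∧ c.reg true (c.proc j).round = false
                then false
              else if c.reg true (c.proc j).round = true ∧ (c.proc j).firstRead = false
                then true else (c.proc j).pref) = b := by
            cases hb' : b with
            | false =>
              have hv1 : c.reg true (c.proc j).round = false := by
                have := hR (c.proc j).round (by omega)
                rwa [hb'] at this
              rw [hv1]
              by_cases hv0 : (c.proc j).firstRead = true
              · rw [if_pos ⟨hv0, rfl⟩]
              · rw [if_neg (by simp [hv0]), if_neg (by simp), hpref, hb']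
            | true =>
              have hv0 : (c.proc j).firstRead = false := hfr trivial hb'
              rw [hv0, if_neg (by simp)]
              by_cases hv1 : c.reg true (c.proc j).round = true
              · rw [if_pos ⟨hv1, rfl⟩]
              · rw [if_neg (by simp [hv1]), hpref, hb']
          have hps : procStep c.reg (c.proc j) =
              ({c.proc j with pc := 2, pref := b}, none) := by
            unfold procStep
            rw [if_neg hnd, if_neg (by omega), if_pos hpc]
            dsimp only
            rw [hp]
          refine ⟨_, _, hps, ?_, by intro x y h; simp at h⟩
          unfold PInv
          rw [if_neg (by norm_num)]
          exact ⟨hdec, rfl, rfl, by rw [hround], by norm_num⟩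
        -- k = 2 : write a_b[1]
        · have hps : procStep c.reg (c.proc j) =
              ({c.proc j with pc := 3}, some ((c.proc j).pref, (c.proc j).round)) := by
            unfold procStep
            rw [if_neg hnd, if_neg (by omega), if_neg (by omega), if_pos hpc]
          refine ⟨_, _, hps, ?_, ?_⟩
          · unfold PInv
            rw [if_neg (by norm_num)]
            exact ⟨hdec, hpref, rfl, by rw [hround], by norm_num⟩
          · intro x y h
            rw [Option.some_inj, Prod.ext_iff] at h
            obtain ⟨h1, h2⟩ := h
            simp only at h1 h2
            refine ⟨by rw [← h1, hpref], ?_⟩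
            omega
        -- k = 3 : read a_{1-b}[0] = 1, advance to round 2
        · have hcond : c.reg (!(c.proc j).pref) ((c.proc j).round - 1) = true := by
            rw [hround]; simpa using h0 (!(c.proc j).pref)
          have hps : procStep c.reg (c.proc j) =
              ({c.proc j with pc := 0, round := (c.proc j).round + 1}, none) := by
            unfold procStep
            rw [if_neg hnd, if_neg (by omega), if_neg (by omega), if_neg (by omega),
              if_neg (by rw [hcond]; simp)]
          refine ⟨_, _, hps, ?_, by intro x y h; simp at h⟩
          unfold PInv
          rw [if_neg (by norm_num)]
          exact ⟨hdec, hpref, rfl, by rw [hround], by norm_num⟩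
        -- k = 4 : read a_0[2]
        · have hps : procStep c.reg (c.proc j) =
              ({c.proc j with pc := 1, firstRead := c.reg false (c.proc j).round}, none) := by
            unfold procStep; rw [if_neg hnd, if_pos hpc]
          refine ⟨_, _, hps, ?_, by intro x y h; simp at h⟩
          unfold PInv
          rw [if_neg (by norm_num)]
          refine ⟨hdec, hpref, rfl, by rw [hround], fun _ hb' => ?_⟩
          have := hR (c.proc j).round (by omega)
          rw [hb'] at this
          simpa using this
        -- k = 5 : read a_1[2], set preference
        · have hp : (if (c.proc j).firstRead = true ∧ c.reg true (c.proc j).round = false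
                then false
              else if c.reg true (c.proc j).round = true ∧ (c.proc j).firstRead = false
                then true else (c.proc j).pref) = b := by
            cases hb' : b with
            | false =>
              have hv1 : c.reg true (c.proc j).round = false := by
                have := hR (c.proc j).round (by omega)
                rwa [hb'] at this
              rw [hv1]
              by_cases hv0 : (c.proc j).firstRead = true
              · rw [if_pos ⟨hv0, rfl⟩]
              · rw [if_neg (by simp [hv0]), if_neg (by simp), hpref, hb']
            | true =>
              have hv0 : (c.proc j).firstRead = false := hfr trivial hb'
              rw [hv0, if_neg (by simp)]
              by_cases hv1 : c.reg true (c.proc j).round = true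
              · rw [if_pos ⟨hv1, rfl⟩]
              · rw [if_neg (by simp [hv1]), hpref, hb']
          have hps : procStep c.reg (c.proc j) =
              ({c.proc j with pc := 2, pref := b}, none) := by
            unfold procStep
            rw [if_neg hnd, if_neg (by omega), if_pos hpc]
            dsimp only
            rw [hp]
          refine ⟨_, _, hps, ?_, by intro x y h; simp at h⟩
          unfold PInv
          rw [if_neg (by norm_num)]
          exact ⟨hdec, rfl, rfl, by rw [hround], by norm_num⟩
        -- k = 6 : write a_b[2]
        · have hps : procStep c.reg (c.proc j) =
              ({c.proc j with pc := 3}, some ((c.proc j).pref, (c.proc j).round)) := by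
            unfold procStep
            rw [if_neg hnd, if_neg (by omega), if_neg (by omega), if_pos hpc]
          refine ⟨_, _, hps, ?_, ?_⟩
          · unfold PInv
            rw [if_neg (by norm_num)]
            exact ⟨hdec, hpref, rfl, by rw [hround], by norm_num⟩
          · intro x y h
            rw [Option.some_inj, Prod.ext_iff] at h
            obtain ⟨h1, h2⟩ := h
            simp only at h1 h2
            refine ⟨by rw [← h1, hpref], ?_⟩
            omega
        -- k = 7 : read a_{1-b}[1] = 0, decide b
        · have hcond : c.reg (!(c.proc j).pref) ((c.proc j).round - 1) = false := by
            rw [hround, hpref]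
            exact hR 1 le_rfl
          have hps : procStep c.reg (c.proc j) =
              ({c.proc j with decided := some (c.proc j).pref}, none) := by
            unfold procStep
            rw [if_neg hnd, if_neg (by omega), if_neg (by omega), if_neg (by omega),
              if_pos hcond]
          refine ⟨_, _, hps, ?_, by intro x y h; simp at h⟩
          unfold PInv
          rw [if_pos (by norm_num)]
          simp [hpref]
      obtain ⟨s', w, hps, hs', hw⟩ := key
      refine ⟨?_, ?_, ?_⟩
      · intro r hr; rw [hrun]
        show (match (procStep c.reg (c.proc j)).2 with
          | some w => if (!b) = w.1 ∧ r = w.2 then true else c.reg (!b) r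
          | none => c.reg (!b) r) = false
        rw [hps]
        cases w with
        | none => exact hR r hr
        | some w =>
          obtain ⟨hx, _⟩ := hw w.1 w.2 rfl
          dsimp only
          rw [if_neg (by rw [hx]; exact fun h => hb h.1)]
          exact hR r hr
      · intro x; rw [hrun]
        show (match (procStep c.reg (c.proc j)).2 with
          | some w => if x = w.1 ∧ 0 = w.2 then true else c.reg x 0
          | none => c.reg x 0) = true
        rw [hps]
        cases w with
        | none => exact h0 x
        | some w =>
          obtain ⟨_, hy⟩ := hw w.1 w.2 rfl
          dsimp only
          rw [if_neg (by exact fun h => by omega)]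
          exact h0 x
      · intro i
        rw [hrun, cnt_succ]
        by_cases hij : j = i
        · subst hij
          simpa [step, hps, ← hk, ← hj] using hs'
        · have hii : sched t = i ↔ False := by constructor <;> intro h <;> simp_all
          simp only [step, hps]
          simp [Function.update_of_ne (Ne.symm hij), hii]
          exact hP i


/-- validity, Lemma 2 of the paper.  If every process starts
lean-consensus with the same input bit `b`, then in every execution every process that
has executed at least `8` operations (i.e. has completed its second round) has decided
`b`. -/
theorem validity {N : ℕ} (b : Bool) (input : Fin N → Bool) (hinput : ∀ i, input i = b)
    (sched : ℕ → Fin N) (i : Fin N) (t : ℕ)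
    (h8 : 8 ≤ ((Finset.range t).filter fun s => sched s = i).card) :
    ((run input sched t).proc i).decided = some b := by
  have h := (invariant b input hinput sched t).2.2 i
  unfold PInv at h
  rw [if_pos (show 8 ≤ cnt sched i t from h8)] at h
  exact h
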